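/- arXiv:2203.07926 — 2 statements merged into one kernel-verified Lean document; each statement's English description precedes it below -/
import Mathlib

section
/- Explicit travelling-wave solution in the case c₁ = 0: Let n ≥ 1, k ∈ ℝⁿ with k ≠ 0, λ ∈ ℝ and v₀ > 0. On the open set U := { (s,x) ∈ ℝ × ℝⁿ : |k|² − 2 λ v₀² (λ s + k·x) > 0 }, define v(s,x) := v₀ |k| / √( |k|² − 2 λ v₀² (λ s + k·x) ). Then v is positive and satisfies ∂v/∂s = v⁻² Δv − 2 v⁻³ |∇v|² at every point of U. -/
open scoped RealInnerProductSpace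

noncomputable section

lemma aux1 (c B D t : ℝ) (h : 0 < D - B * t) :
    HasDerivAt (fun t => c / Real.sqrt (D - B * t))
      (c * B / (2 * Real.sqrt (D - B * t) ^ 3)) t := by
  have hu : HasDerivAt (fun t : ℝ => D - B * t) (-B) t := by
    simpa using ((hasDerivAt_id t).const_mul B).const_sub D
  have hs : HasDerivAt (fun t : ℝ => Real.sqrt (D - B * t))
      (1 / (2 * Real.sqrt (D - B * t)) * (-B)) t :=
    (Real.hasDerivAt_sqrt h.ne').comp t hu
  have hne : Real.sqrt (D - B * t) ≠ 0 := (Real.sqrt_pos.mpr h).ne'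
  have h2 := (hasDerivAt_const t c).div hs hne
  refine h2.congr_deriv (Eq.symm ?_)
  generalize Real.sqrt (D - B * t) = u at hne ⊢
  rw [div_eq_div_iff (mul_ne_zero two_ne_zero (pow_ne_zero _ hne)) (pow_ne_zero _ hne)]
  field_simp
  ring

lemma aux2 (c B D t : ℝ) (h : 0 < D - B * t) :
    HasDerivAt (fun t => c * B / (2 * Real.sqrt (D - B * t) ^ 3))
      (3 * c * B ^ 2 / (4 * Real.sqrt (D - B * t) ^ 5)) t := by
  have hu : HasDerivAt (fun t : ℝ => D - B * t) (-B) t := by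
    simpa using ((hasDerivAt_id t).const_mul B).const_sub D
  have hs : HasDerivAt (fun t : ℝ => Real.sqrt (D - B * t))
      (1 / (2 * Real.sqrt (D - B * t)) * (-B)) t :=
    (Real.hasDerivAt_sqrt h.ne').comp t hu
  have hne : Real.sqrt (D - B * t) ≠ 0 := (Real.sqrt_pos.mpr h).ne'
  have hden : HasDerivAt (fun t : ℝ => 2 * Real.sqrt (D - B * t) ^ 3)
      (2 * ((3 : ℕ) * Real.sqrt (D - B * t) ^ 2 * (1 / (2 * Real.sqrt (D - B * t)) * (-B)))) t :=
    (hs.pow 3).const_mul 2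
  have hdne : 2 * Real.sqrt (D - B * t) ^ 3 ≠ 0 := by positivity
  have h2 := (hasDerivAt_const t (c * B)).div hden hdne
  refine h2.congr_deriv (Eq.symm ?_)
  generalize Real.sqrt (D - B * t) = u at hne ⊢
  push_cast
  field_simp
  ring

/-- The Euclidean Laplacian: the sum of the second partial derivatives. -/
def lap {n : ℕ} (f : EuclideanSpace ℝ (Fin n) → ℝ) (x : EuclideanSpace ℝ (Fin n)) : ℝ :=
  ∑ i : Fin n,
    fderiv ℝ (fun y => fderiv ℝ f y (EuclideanSpace.single i 1)) x (EuclideanSpace.single i 1)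

/-- Explicit travelling-wave solution in the case `c₁ = 0`:
`v(s,x) = v₀ |k| / √(|k|² − 2λv₀²(λs + k·x))` is positive and solves
`∂v/∂s = v⁻² Δv − 2 v⁻³ |∇v|²` on the set where the radicand is positive. -/
theorem travelling_wave_explicit (n : ℕ) (hn : 1 ≤ n)
    (k : EuclideanSpace ℝ (Fin n)) (hk : k ≠ 0)
    (l v₀ : ℝ) (hv₀ : 0 < v₀)
    (v : ℝ → EuclideanSpace ℝ (Fin n) → ℝ)
    (hv : ∀ s x, v s x =
      v₀ * ‖k‖ / Real.sqrt (‖k‖ ^ 2 - 2 * l * v₀ ^ 2 * (l * s + ⟪k, x⟫))) :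
    ∀ s : ℝ, ∀ x : EuclideanSpace ℝ (Fin n),
      0 < ‖k‖ ^ 2 - 2 * l * v₀ ^ 2 * (l * s + ⟪k, x⟫) →
      0 < v s x ∧
      deriv (fun t => v t x) s =
        lap (v s) x / (v s x) ^ 2 - 2 * ‖gradient (v s) x‖ ^ 2 / (v s x) ^ 3 := by
  intro s x hg0
  have hK : (0:ℝ) < ‖k‖ := norm_pos_iff.mpr hk
  set c : ℝ := v₀ * ‖k‖ with hc
  have hcpos : 0 < c := mul_pos hv₀ hK
  set B : ℝ := 2 * l * v₀ ^ 2 with hB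
  set D : ℝ := ‖k‖ ^ 2 - B * (l * s) with hD
  have harg : ∀ y : EuclideanSpace ℝ (Fin n),
      ‖k‖ ^ 2 - B * (l * s + ⟪k, y⟫) = D - B * ⟪k, y⟫ := by
    intro y; rw [hD]; ring
  have hg : 0 < D - B * ⟪k, x⟫ := by rw [← harg x]; exact hg0
  set sg : ℝ := Real.sqrt (D - B * ⟪k, x⟫) with hsgdef
  have hsg : 0 < sg := Real.sqrt_pos.mpr hg
  -- the spatial function
  have hfun : v s = (fun t => c / Real.sqrt (D - B * t)) ∘ ⇑(innerSL ℝ k) := by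
    funext z
    simp only [Function.comp_apply, innerSL_apply_apply, hv s z, harg z]
  have hfd : ∀ y : EuclideanSpace ℝ (Fin n), 0 < D - B * ⟪k, y⟫ →
      HasFDerivAt (v s)
        ((c * B / (2 * Real.sqrt (D - B * ⟪k, y⟫) ^ 3)) • (innerSL ℝ k)) y := by
    intro y hy
    rw [hfun]
    exact (aux1 c B D ⟪k, y⟫ hy).comp_hasFDerivAt_of_eq y
      ((innerSL ℝ k).hasFDerivAt) (by simp [innerSL_apply_apply])
  -- gradient
  have hgrad : gradient (v s) x = (c * B / (2 * sg ^ 3)) • k := by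
    have h2 : HasGradientAt (v s) ((c * B / (2 * sg ^ 3)) • k) x := by
      rw [hasGradientAt_iff_hasFDerivAt]
      refine (hfd x hg).congr_fderiv ?_
      ext z
      simp only [InnerProductSpace.toDual_apply_apply, ContinuousLinearMap.smul_apply,
        innerSL_apply_apply, real_inner_smul_left, smul_eq_mul, hsgdef]
    exact h2.gradient
  have hgradnorm : ‖gradient (v s) x‖ ^ 2 = (c * B / (2 * sg ^ 3)) ^ 2 * ‖k‖ ^ 2 := by
    rw [hgrad, norm_smul, Real.norm_eq_abs, mul_pow, sq_abs]
  -- neighborhood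
  have hnbhd : ∀ᶠ y in nhds x, 0 < D - B * ⟪k, y⟫ := by
    have hcont : Continuous fun y : EuclideanSpace ℝ (Fin n) => D - B * ⟪k, y⟫ :=
      continuous_const.sub (continuous_const.mul (continuous_const.inner continuous_id))
    exact (isOpen_lt continuous_const hcont).mem_nhds hg
  -- Laplacian
  have hnk : ‖k‖ ^ 2 = ∑ i, k i ^ 2 := by
    rw [← real_inner_self_eq_norm_sq]
    simp only [PiLp.inner_apply, RCLike.inner_apply, conj_trivial, sq]
  have hterm : ∀ i : Fin n,
      fderiv ℝ (fun y => fderiv ℝ (v s) y (EuclideanSpace.single i 1)) x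
          (EuclideanSpace.single i 1)
        = (3 * c * B ^ 2 / (4 * sg ^ 5)) * k i ^ 2 := by
    intro i
    have heq : (fun y => fderiv ℝ (v s) y (EuclideanSpace.single i 1)) =ᶠ[nhds x]
        (fun y => ((fun t => c * B / (2 * Real.sqrt (D - B * t) ^ 3)) ∘ ⇑(innerSL ℝ k)) y
          * k i) := by
      filter_upwards [hnbhd] with y hy
      rw [(hfd y hy).fderiv]
      simp [innerSL_apply_apply, EuclideanSpace.inner_single_right]
    rw [heq.fderiv_eq]
    have h2 := ((aux2 c B D ⟪k, x⟫ hg).comp_hasFDerivAt_of_eq x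
      ((innerSL ℝ k).hasFDerivAt) (by simp [innerSL_apply_apply])).mul_const (k i)
    rw [h2.fderiv]
    simp [innerSL_apply_apply, EuclideanSpace.inner_single_right, hsgdef]
    ring
  have hlap : lap (v s) x = (3 * c * B ^ 2 / (4 * sg ^ 5)) * ‖k‖ ^ 2 := by
    simp only [lap, hterm, ← Finset.mul_sum, hnk]
  -- time derivative
  have hDt : ∀ t : ℝ, ‖k‖ ^ 2 - B * (l * t + ⟪k, x⟫)
      = (‖k‖ ^ 2 - B * ⟪k, x⟫) - (B * l) * t := by intro t; ring
  have hg' : 0 < (‖k‖ ^ 2 - B * ⟪k, x⟫) - (B * l) * s := by rw [← hDt s]; exact hg0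
  have ht := aux1 c (B * l) (‖k‖ ^ 2 - B * ⟪k, x⟫) s hg'
  have htfun : (fun t => v t x)
      = fun t => c / Real.sqrt ((‖k‖ ^ 2 - B * ⟪k, x⟫) - (B * l) * t) := by
    funext t; rw [hv t x, hDt t]
  have hsg2 : Real.sqrt ((‖k‖ ^ 2 - B * ⟪k, x⟫) - (B * l) * s) = sg := by
    rw [hsgdef]; congr 1; rw [hD]; ring
  have hderiv : deriv (fun t => v t x) s = c * (B * l) / (2 * sg ^ 3) := by
    rw [htfun, ht.deriv, hsg2]
  have hval : v s x = c / sg := by rw [hv s x, harg x]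
  refine ⟨by rw [hval]; positivity, ?_⟩
  rw [hderiv, hval, hlap, hgradnorm, hB, hc]
  have hKne : ‖k‖ ≠ 0 := hK.ne'
  have hsgne : sg ≠ 0 := hsg.ne'
  field_simp
  ring
end
end

section
/- Exact dust solution in dimension m = 3 (verification of equation (33) of the paper, without the absolute value, on its domain of positivity): Let k = (k₁,k₂) ∈ ℝ² with k ≠ 0, λ ∈ ℝ and ν₀ > 0. On the open set U := { (a,x,y) ∈ (0,∞) × ℝ² : |k|² + λ ν₀² ( λ ln a − 2(k₁ x + k₂ y) ) > 0 }, define ρ(a,x,y) := ν₀² |k|² / ( a² ( |k|² + λ ν₀² ( λ ln a − 2(k₁ x + k₂ y) ) ) ). Then ρ is positive and satisfies a ∂ρ/∂a = −2ρ + (1/(2a²)) ( (3/2) |∇ρ|²/ρ² − Δρ/ρ ) at every point of U, where |k|² = k₁² + k₂². -/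
open scoped RealInnerProductSpace

noncomputable section

set_option maxHeartbeats 1000000
set_option linter.all false

/-- Exact dust solution in dimension `m = 3`:
`ρ(a,x,y) = ν₀²|k|²/(a²(|k|² + λν₀²(λ ln a − 2(k₁x + k₂y))))` is positive and solves
the dust continuity equation `a ∂ρ/∂a = −2ρ + (1/(2a²))((3/2)|∇ρ|²/ρ² − Δρ/ρ)` on the
set where the denominator factor is positive. -/
theorem exact_dust_solution (k₁ k₂ : ℝ) (hk : (k₁, k₂) ≠ (0, 0))
    (l ν₀ : ℝ) (hν₀ : 0 < ν₀)
    (ρ : ℝ → EuclideanSpace ℝ (Fin 2) → ℝ)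
    (hρ : ∀ a : ℝ, ∀ p : EuclideanSpace ℝ (Fin 2), ρ a p =
      ν₀ ^ 2 * (k₁ ^ 2 + k₂ ^ 2) /
        (a ^ 2 * ((k₁ ^ 2 + k₂ ^ 2) +
          l * ν₀ ^ 2 * (l * Real.log a - 2 * (k₁ * p 0 + k₂ * p 1))))) :
    ∀ a : ℝ, 0 < a → ∀ p : EuclideanSpace ℝ (Fin 2),
      0 < (k₁ ^ 2 + k₂ ^ 2) + l * ν₀ ^ 2 * (l * Real.log a - 2 * (k₁ * p 0 + k₂ * p 1)) →
      0 < ρ a p ∧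
      a * deriv (fun t => ρ t p) a =
        -2 * ρ a p + (1 / (2 * a ^ 2)) *
          ((3 / 2) * ‖gradient (ρ a) p‖ ^ 2 / (ρ a p) ^ 2 - lap (ρ a) p / ρ a p) := by
  intro a ha p hD
  have ha0 : a ≠ 0 := ha.ne'
  have hKpos : 0 < k₁ ^ 2 + k₂ ^ 2 := by
    have h : k₁ ≠ 0 ∨ k₂ ≠ 0 := by
      by_contra hc; push_neg at hc; exact hk (by simp [hc.1, hc.2])
    rcases h with h1 | h1 <;> positivity
  set K : ℝ := k₁ ^ 2 + k₂ ^ 2 with hKdef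
  have hKne : K ≠ 0 := hKpos.ne'
  set A : ℝ := K + l * ν₀ ^ 2 * (l * Real.log a) with hAdef
  set c : ℝ := -(2 * (l * ν₀ ^ 2)) with hcdef
  set C : ℝ := ν₀ ^ 2 * K / a ^ 2 with hCdef
  have hCpos : 0 < C := by rw [hCdef]; positivity
  set L : EuclideanSpace ℝ (Fin 2) →L[ℝ] ℝ :=
    k₁ • EuclideanSpace.proj (0 : Fin 2) + k₂ • EuclideanSpace.proj (1 : Fin 2) with hLdef
  have hLapp : ∀ q : EuclideanSpace ℝ (Fin 2), L q = k₁ * q 0 + k₂ * q 1 := by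
    intro q; simp [hLdef]
  -- representation of ρ a
  have hrepr : ∀ q : EuclideanSpace ℝ (Fin 2), ρ a q = C / (A + c * L q) := by
    intro q
    rw [hρ, hLapp, hCdef]
    rw [div_div]
    congr 1
    rw [hAdef, hcdef]; ring
  -- positivity of the denominator at p
  have hDpos : 0 < A + c * L p := by
    have : A + c * L p
        = K + l * ν₀ ^ 2 * (l * Real.log a - 2 * (k₁ * p 0 + k₂ * p 1)) := by
      rw [hLapp, hAdef, hcdef]; ring
    rw [this]; exact hD
  set D : ℝ := A + c * L p with hDdef
  have hDne : D ≠ 0 := hDpos.ne'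
  have hρap : ρ a p = C / D := hrepr p
  have hρpos : 0 < ρ a p := by rw [hρap]; positivity
  refine ⟨hρpos, ?_⟩
  -- spatial derivative (first order), valid near any point with positive denominator
  have hfd : ∀ q : EuclideanSpace ℝ (Fin 2), A + c * L q ≠ 0 →
      HasFDerivAt (ρ a) ((-(C * c) / (A + c * L q) ^ 2) • L) q := by
    intro q hq
    have hd : HasDerivAt (fun t : ℝ => A + c * t) c (L q) := by
      simpa using ((hasDerivAt_id (L q)).const_mul c).const_add A
    have h1 : HasDerivAt (fun t : ℝ => C / (A + c * t)) (-(C * c) / (A + c * L q) ^ 2) (L q) := by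
      have := (hasDerivAt_const (L q) C).div hd hq
      convert this using 2
      · rfl
      · rfl
      · rfl
      ring
    have h2 := h1.comp_hasFDerivAt q L.hasFDerivAt
    have heq : (fun t : ℝ => C / (A + c * t)) ∘ L = ρ a := by
      funext q'; simp [Function.comp, (hrepr q').symm]
    rwa [heq] at h2
  -- the gradient
  set s : ℝ := -(C * c) / D ^ 2 with hsdef
  set v : EuclideanSpace ℝ (Fin 2) :=
    s • (EuclideanSpace.single (0 : Fin 2) k₁ + EuclideanSpace.single (1 : Fin 2) k₂) with hvdef
  have hgrad : gradient (ρ a) p = v := by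
    have : HasGradientAt (ρ a) v p := by
      rw [hasGradientAt_iff_hasFDerivAt]
      have hdual : (InnerProductSpace.toDual ℝ (EuclideanSpace ℝ (Fin 2))) v = s • L := by
        ext w
        simp only [InnerProductSpace.toDual_apply_apply, hvdef, ContinuousLinearMap.smul_apply,
          smul_eq_mul]
        rw [real_inner_smul_left, inner_add_left, EuclideanSpace.inner_single_left,
          EuclideanSpace.inner_single_left, hLapp]
        simp
      rw [hdual]
      exact hfd p hDne
    exact this.gradient
  have hnormsq : ‖gradient (ρ a) p‖ ^ 2 = s ^ 2 * K := by
    rw [hgrad]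
    rw [EuclideanSpace.norm_eq]
    rw [Real.sq_sqrt (by positivity)]
    rw [Fin.sum_univ_two]
    have h0 : v 0 = s * k₁ := by
      simp [hvdef, EuclideanSpace.single_apply]
    have h1 : v 1 = s * k₂ := by
      simp [hvdef, EuclideanSpace.single_apply]
    simp only [h0, h1, Real.norm_eq_abs, sq_abs]
    rw [hKdef]; ring
  -- the laplacian
  have hlap : lap (ρ a) p = (2 * C * c ^ 2 / D ^ 3) * K := by
    have hOpen : ∀ᶠ q in nhds p, 0 < A + c * L q := by
      have hcont : Continuous fun q : EuclideanSpace ℝ (Fin 2) => A + c * L q := by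
        exact continuous_const.add (continuous_const.mul L.continuous)
      exact (isOpen_lt continuous_const hcont).mem_nhds hDpos
    have key : ∀ i : Fin 2,
        fderiv ℝ (fun y => fderiv ℝ (ρ a) y (EuclideanSpace.single i 1)) p
          (EuclideanSpace.single i 1)
        = (2 * C * c ^ 2 / D ^ 3) * (L (EuclideanSpace.single i 1)) ^ 2 := by
      intro i
      set e : ℝ := L (EuclideanSpace.single i 1) with hedef
      have hev : (fun y => fderiv ℝ (ρ a) y (EuclideanSpace.single i 1))
          =ᶠ[nhds p] fun y => (-(C * c) / (A + c * L y) ^ 2) * e := by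
        filter_upwards [hOpen] with q hq
        rw [(hfd q hq.ne').fderiv]
        simp [hedef]
      rw [hev.fderiv_eq]
      -- derivative of the nice representative
      have hd : HasDerivAt (fun t : ℝ => A + c * t) c (L p) := by
        simpa using ((hasDerivAt_id (L p)).const_mul c).const_add A
      have hpow : HasDerivAt (fun t : ℝ => (A + c * t) ^ 2) (2 * (A + c * L p) * c) (L p) := by
        simpa using hd.fun_pow 2
      have h1 : HasDerivAt (fun t : ℝ => (-(C * c) / (A + c * t) ^ 2) * e)
          ((2 * C * c ^ 2 / D ^ 3) * e) (L p) := by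
        have hne2 : (A + c * L p) ^ 2 ≠ 0 := pow_ne_zero 2 hDne
        have := ((hasDerivAt_const (L p) (-(C * c))).div hpow hne2).mul_const e
        convert this using 1
        · rfl
        · rfl
        · rfl
        rw [← hDdef]
        field_simp
        ring
      have h2 := h1.comp_hasFDerivAt p L.hasFDerivAt
      have heq : ((fun t : ℝ => (-(C * c) / (A + c * t) ^ 2) * e) ∘ L)
          = fun y => (-(C * c) / (A + c * L y) ^ 2) * e := rfl
      rw [heq] at h2
      rw [h2.fderiv]
      simp [hedef, mul_pow]
      ring
    have hL0 : L (EuclideanSpace.single (0 : Fin 2) 1) = k₁ := by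
      rw [hLapp]; simp [EuclideanSpace.single_apply]
    have hL1 : L (EuclideanSpace.single (1 : Fin 2) 1) = k₂ := by
      rw [hLapp]; simp [EuclideanSpace.single_apply]
    rw [lap, Fin.sum_univ_two, key 0, key 1, hL0, hL1, hKdef]
    ring
  -- time derivative
  have htime : HasDerivAt (fun t => ρ t p)
      (-(ν₀ ^ 2 * K * (2 * a * D + a * (l ^ 2 * ν₀ ^ 2))) / (a ^ 2 * D) ^ 2) a := by
    have hfun : (fun t => ρ t p)
        = fun t => ν₀ ^ 2 * K /
            (t ^ 2 * (K + l * ν₀ ^ 2 * (l * Real.log t - 2 * (k₁ * p 0 + k₂ * p 1)))) := by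
      funext t; rw [hρ, hKdef]
    rw [hfun]
    have hlog : HasDerivAt Real.log a⁻¹ a := Real.hasDerivAt_log ha0
    have hbr : HasDerivAt
        (fun t => K + l * ν₀ ^ 2 * (l * Real.log t - 2 * (k₁ * p 0 + k₂ * p 1)))
        (l * ν₀ ^ 2 * (l * a⁻¹)) a := by
      exact (((hlog.const_mul l).sub_const _).const_mul (l * ν₀ ^ 2)).const_add K
    have hden : HasDerivAt
        (fun t => t ^ 2 * (K + l * ν₀ ^ 2 * (l * Real.log t - 2 * (k₁ * p 0 + k₂ * p 1))))
        (2 * a * D + a * (l ^ 2 * ν₀ ^ 2)) a := by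
      have := (hasDerivAt_pow 2 a).mul hbr
      convert this using 1
      · rfl
      · rfl
      · rfl
      have hDval : (K + l * ν₀ ^ 2 * (l * Real.log a - 2 * (k₁ * p 0 + k₂ * p 1))) = D := by
        rw [hDdef, hLapp, hAdef, hcdef]; ring
      rw [hDval]
      field_simp
      ring
    have hdne : a ^ 2 * (K + l * ν₀ ^ 2 * (l * Real.log a - 2 * (k₁ * p 0 + k₂ * p 1))) ≠ 0 := by
      have : (0:ℝ) < a ^ 2 * (K + l * ν₀ ^ 2 * (l * Real.log a - 2 * (k₁ * p 0 + k₂ * p 1))) := by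
        apply mul_pos (by positivity) hD
      exact this.ne'
    have := (hasDerivAt_const a (ν₀ ^ 2 * K)).div hden hdne
    convert this using 1
    · rfl
    · rfl
    · rfl
    have hDval : (K + l * ν₀ ^ 2 * (l * Real.log a - 2 * (k₁ * p 0 + k₂ * p 1))) = D := by
      rw [hDdef, hLapp, hAdef, hcdef]; ring
    rw [hDval]
    ring
  rw [htime.deriv, hρap, hnormsq, hlap]
  simp only [hsdef, hCdef, hcdef]
  have hν0 : ν₀ ≠ 0 := hν₀.ne'
  field_simp
  ring
end
end
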